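/- Let F be a finitely generated free group, α: F → F an injective endomorphism, and M_α = ⟨F, t | t⁻¹ft = α(f), f ∈ F⟩ the associated ascending HNN extension. Then the profinite completion of M_α is isomorphic to a semidirect product Ẑ ⋉ P, where P = ⋂_{n∈ℕ} α̂ⁿ(F̂) is the intersection of the images of the iterates of the induced endomorphism α̂ of the profinite completion F̂ of F, and the action of Ẑ is via the (automorphic) restriction of α̂ to P. -/

import Mathlib

/-- The index type of finite quotients: finite-index normal subgroups. -/
def FinQuot (G : Type*) [Group G] : Type _ :=
  {N : Subgroup G // N.Normal ∧ N.FiniteIndex}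

instance {G : Type*} [Group G] (N : FinQuot G) : N.1.Normal := N.2.1
instance {G : Type*} [Group G] (N : FinQuot G) : N.1.FiniteIndex := N.2.2

instance {G : Type*} [Group G] (N : FinQuot G) : TopologicalSpace (G ⧸ N.1) := ⊥

/-- The subgroup of compatible families in the product of all finite quotients. -/
def profCompat (G : Type*) [Group G] : Subgroup (Π N : FinQuot G, G ⧸ N.1) where
  carrier := {x | ∀ (N M : FinQuot G) (h : N.1 ≤ M.1),
    QuotientGroup.map N.1 M.1 (MonoidHom.id G) (by simpa using h) (x N) = x M}
  one_mem' := by intro N M h; simp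
  mul_mem' := by
    intro a b ha hb N M h
    simp only [Pi.mul_apply, map_mul, ha N M h, hb N M h]
  inv_mem' := by
    intro a ha N M h
    simp only [Pi.inv_apply, map_inv, ha N M h]

/-- The profinite completion of a group, as the inverse limit of its finite quotients. -/
def ProfComp (G : Type*) [Group G] : Type _ := profCompat G

instance {G : Type*} [Group G] : Group (ProfComp G) :=
  inferInstanceAs (Group (profCompat G))

instance {G : Type*} [Group G] : TopologicalSpace (ProfComp G) :=
  inferInstanceAs (TopologicalSpace {x : Π N : FinQuot G, G ⧸ N.1 // x ∈ profCompat G})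

/-- The canonical map from a group to its profinite completion. -/
def toProf (G : Type*) [Group G] : G →* ProfComp G where
  toFun g := ⟨fun N => QuotientGroup.mk g, by
    intro N M h
    simp [QuotientGroup.map_mk]⟩
  map_one' := by apply Subtype.ext; funext N; rfl
  map_mul' a b := by apply Subtype.ext; funext N; rfl

/-- The pullback of a finite-index normal subgroup along a homomorphism. -/
def pullFQ {Λ Γ : Type*} [Group Λ] [Group Γ] (φ : Λ →* Γ) (N : FinQuot Γ) : FinQuot Λ :=
  ⟨N.1.comap φ, N.2.1.comap φ, ⟨by
    refine ne_zero_of_dvd_ne_zero N.2.2.index_ne_zero ?_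
    rw [Subgroup.index_comap]
    exact Subgroup.relIndex_dvd_index_of_normal N.1 φ.range⟩⟩

/-- The induced homomorphism between profinite completions. -/
def profMap {Λ Γ : Type*} [Group Λ] [Group Γ] (φ : Λ →* Γ) :
    ProfComp Λ →* ProfComp Γ where
  toFun x := ⟨fun N => QuotientGroup.map (pullFQ φ N).1 N.1 φ le_rfl (x.1 (pullFQ φ N)), by
    intro N M h
    obtain ⟨g, hg⟩ := QuotientGroup.mk_surjective (x.1 (pullFQ φ N))
    have hx := x.2 (pullFQ φ N) (pullFQ φ M) (Subgroup.comap_mono h)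
    show QuotientGroup.map _ _ _ _
        (QuotientGroup.map _ _ φ _ (x.1 (pullFQ φ N))) =
      QuotientGroup.map _ _ φ _ (x.1 (pullFQ φ M))
    rw [← hx, ← hg]
    rfl⟩
  map_one' := by
    apply Subtype.ext
    funext N
    show QuotientGroup.map _ _ φ _ ((1 : ProfComp Λ).1 (pullFQ φ N)) = _
    rw [show ((1 : ProfComp Λ).1 (pullFQ φ N)) = 1 from rfl, map_one]
    rfl
  map_mul' a b := by
    apply Subtype.ext
    funext N
    show QuotientGroup.map _ _ _ _ ((a * b).1 (pullFQ φ N)) = _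
    have : (a * b).1 (pullFQ φ N) = a.1 (pullFQ φ N) * b.1 (pullFQ φ N) := rfl
    rw [this, map_mul]
    rfl

/-- A group is residually finite if every nontrivial element survives in some finite
quotient. -/
def ResiduallyFinite (G : Type*) [Group G] : Prop :=
  ∀ g : G, g ≠ 1 → ∃ N : Subgroup G, N.Normal ∧ N.FiniteIndex ∧ g ∉ N

/-- The mapping torus (ascending HNN extension) of an injective endomorphism `α` of a
group `G`: `⟨G, t ∣ t⁻¹ g t = α g⟩`, realized as the HNN extension of `G` along the
isomorphism `G ≃ α.range`. -/
noncomputable def MappingTorus {G : Type*} [Group G] (α : G →* G)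
    (hα : Function.Injective ⇑α) : Type _ :=
  HNNExtension G ⊤ α.range (Subgroup.topEquiv.trans (MonoidHom.ofInjective hα))

noncomputable instance {G : Type*} [Group G] (α : G →* G) (hα : Function.Injective ⇑α) :
    Group (MappingTorus α hα) :=
  inferInstanceAs (Group (HNNExtension G ⊤ α.range
    (Subgroup.topEquiv.trans (MonoidHom.ofInjective hα))))

/-- The canonical embedding of the base group into the mapping torus. -/
noncomputable def MappingTorus.of {G : Type*} [Group G] (α : G →* G)
    (hα : Function.Injective ⇑α) : G →* MappingTorus α hα :=
  HNNExtension.of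

/-- The stable letter of the mapping torus. -/
noncomputable def MappingTorus.t {G : Type*} [Group G] (α : G →* G)
    (hα : Function.Injective ⇑α) : MappingTorus α hα :=
  HNNExtension.t

/-- The induced endomorphism of the profinite completion, as a monoid endomorphism
(so that it can be iterated). -/
def profEnd {G : Type*} [Group G] (α : G →* G) : Monoid.End (ProfComp G) :=
  profMap α

/-- The eventual image `P = ⋂ₙ α̂ⁿ(Ĝ)` of the induced endomorphism `α̂` of the
profinite completion. -/
def profEventualImage {G : Type*} [Group G] (α : G →* G) : Subgroup (ProfComp G) :=
  ⨅ n : ℕ, Subgroup.map (profEnd α ^ n) ⊤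
/-! ### Basic infrastructure for `ProfComp` -/

section Infra

variable {G : Type*} [Group G] {H : Type*} [Group H]

theorem ProfComp.ext' {x y : ProfComp G} (h : ∀ N : FinQuot G, x.1 N = y.1 N) : x = y :=
  Subtype.ext (funext h)

theorem ProfComp.compat (x : ProfComp G) {N M : FinQuot G} (h : N.1 ≤ M.1) :
    QuotientGroup.map N.1 M.1 (MonoidHom.id G) (by simpa using h) (x.1 N) = x.1 M :=
  x.2 N M h

theorem toProf_coord (g : G) (N : FinQuot G) : (toProf G g).1 N = QuotientGroup.mk g := rfl

theorem profMap_coord (φ : H →* G) (x : ProfComp H) (N : FinQuot G) :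
    (profMap φ x).1 N =
      QuotientGroup.map (pullFQ φ N).1 N.1 φ le_rfl (x.1 (pullFQ φ N)) := rfl

theorem one_coord (N : FinQuot G) : (1 : ProfComp G).1 N = 1 := rfl

theorem mul_coord (x y : ProfComp G) (N : FinQuot G) : (x * y).1 N = x.1 N * y.1 N := rfl

theorem inv_coord (x : ProfComp G) (N : FinQuot G) : (x⁻¹).1 N = (x.1 N)⁻¹ := rfl

theorem profMap_toProf (φ : H →* G) (g : H) : profMap φ (toProf H g) = toProf G (φ g) :=
  ProfComp.ext' fun N => by
    rw [profMap_coord, toProf_coord, toProf_coord]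
    erw [QuotientGroup.map_mk]

instance (N : FinQuot G) : DiscreteTopology (G ⧸ N.1) := ⟨rfl⟩

instance (N : FinQuot G) : IsTopologicalGroup (G ⧸ N.1) where
  continuous_mul := continuous_of_discreteTopology
  continuous_inv := continuous_of_discreteTopology

instance : IsTopologicalGroup (ProfComp G) :=
  inferInstanceAs (IsTopologicalGroup (profCompat G))

instance : T2Space (ProfComp G) :=
  inferInstanceAs (T2Space {x : Π N : FinQuot G, G ⧸ N.1 // x ∈ profCompat G})

theorem continuous_coord (N : FinQuot G) : Continuous fun x : ProfComp G => x.1 N :=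
  (continuous_apply N).comp continuous_subtype_val

theorem continuous_profMap (φ : H →* G) : Continuous (profMap φ) :=
  Continuous.subtype_mk
    (continuous_pi fun N =>
      continuous_of_discreteTopology.comp (continuous_coord (pullFQ φ N))) _

theorem isClosed_profCompat :
    IsClosed {x : Π N : FinQuot G, G ⧸ N.1 | x ∈ profCompat G} := by
  have h : {x : Π N : FinQuot G, G ⧸ N.1 | x ∈ profCompat G} =
      ⋂ (N : FinQuot G), ⋂ (M : FinQuot G), ⋂ (h : N.1 ≤ M.1),
        {x : Π N : FinQuot G, G ⧸ N.1 |
          QuotientGroup.map N.1 M.1 (MonoidHom.id G) (by simpa using h) (x N) = x M} := by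
    ext x
    simp only [Set.mem_iInter, Set.mem_setOf_eq]
    rfl
  rw [h]
  exact isClosed_iInter fun N => isClosed_iInter fun M => isClosed_iInter fun h =>
    isClosed_eq (continuous_of_discreteTopology.comp (continuous_apply N))
      (continuous_apply M)

instance : CompactSpace (ProfComp G) :=
  isCompact_iff_compactSpace.mp isClosed_profCompat.isCompact

/-- The infimum of a finite set of finite-index normal subgroups. -/
def finInfFQ (I : Finset (FinQuot G)) : FinQuot G :=
  ⟨⨅ N ∈ I, N.1,
   { conj_mem := by
      intro n hn g
      simp only [Subgroup.mem_iInf] at hn ⊢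
      intro N hN
      exact N.2.1.conj_mem n (hn N hN) g },
   Subgroup.finiteIndex_iInf' _ fun N _ => N.2.2⟩

theorem finInfFQ_le {I : Finset (FinQuot G)} {N : FinQuot G} (hN : N ∈ I) :
    (finInfFQ I).1 ≤ N.1 :=
  iInf₂_le N hN

theorem mem_closure_of_coords {S : Set (ProfComp G)} {x : ProfComp G}
    (h : ∀ N : FinQuot G, ∃ s ∈ S, s.1 N = x.1 N) : x ∈ closure S := by
  rw [mem_closure_iff]
  intro U hU hxU
  obtain ⟨V, hV, hVeq⟩ := isOpen_induced_iff.mp hU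
  have hxV : x.1 ∈ V := by rw [← hVeq] at hxU; exact hxU
  obtain ⟨I, u, hu, hsub⟩ := isOpen_pi_iff.mp hV x.1 hxV
  obtain ⟨s, hsS, hs⟩ := h (finInfFQ I)
  refine ⟨s, ?_, hsS⟩
  rw [← hVeq]
  apply hsub
  intro N hN
  have h1 : s.1 N = x.1 N := by
    rw [← ProfComp.compat s (finInfFQ_le hN), ← ProfComp.compat x (finInfFQ_le hN), hs]
  exact h1 ▸ (hu N hN).2

theorem denseRange_toProf : DenseRange (toProf G) := by
  intro x
  apply mem_closure_of_coords
  intro N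
  obtain ⟨g, hg⟩ := QuotientGroup.mk_surjective (x.1 N)
  exact ⟨toProf G g, ⟨g, rfl⟩, hg⟩

theorem prof_fun_ext {K : Type*} [TopologicalSpace K] [T2Space K] {f g : ProfComp G → K}
    (hf : Continuous f) (hg : Continuous g)
    (h : ∀ y : G, f (toProf G y) = g (toProf G y)) (x : ProfComp G) : f x = g x :=
  congrFun (DenseRange.equalizer denseRange_toProf hf hg (funext h)) x

end Infra
/-! ### Mapping torus generalities -/

section MT

variable {G : Type*} [Group G] (α : G →* G) (hα : Function.Injective ⇑α)

theorem mt_t_mul_of (g : G) :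
    MappingTorus.t α hα * MappingTorus.of α hα g =
      MappingTorus.of α hα (α g) * MappingTorus.t α hα := by
  have h := HNNExtension.t_mul_of
    (φ := Subgroup.topEquiv.trans (MonoidHom.ofInjective hα)) ⟨g, trivial⟩
  simp [MappingTorus.of, MappingTorus.t, MonoidHom.ofInjective_apply] at h
  exact h

theorem mt_conj (g : G) :
    MappingTorus.of α hα (α g) =
      MappingTorus.t α hα * MappingTorus.of α hα g * (MappingTorus.t α hα)⁻¹ := by
  rw [mt_t_mul_of]
  group

theorem mt_closure :
    Subgroup.closure (Set.range (MappingTorus.of α hα) ∪ {MappingTorus.t α hα}) = ⊤ := by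
  rw [eq_top_iff]
  intro x _
  induction x using HNNExtension.induction_on with
  | of g => exact Subgroup.subset_closure (Or.inl ⟨g, rfl⟩)
  | t => exact Subgroup.subset_closure (Or.inr rfl)
  | mul a b ha hb => exact mul_mem (ha trivial) (hb trivial)
  | inv a ha => exact inv_mem (ha trivial)

/-- The projection of the mapping torus onto `ℤ` killing the base group. -/
noncomputable def mtPi : MappingTorus α hα →* Multiplicative ℤ :=
  HNNExtension.lift 1 (Multiplicative.ofAdd 1) (fun _ => by simp)

theorem mtPi_of (g : G) : mtPi α hα (MappingTorus.of α hα g) = 1 :=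
  HNNExtension.lift_of _ _ _ g

theorem mtPi_t : mtPi α hα (MappingTorus.t α hα) = Multiplicative.ofAdd 1 :=
  HNNExtension.lift_t _ _ _

/-- The canonical section `ℤ → M_α` sending the generator to the stable letter. -/
noncomputable def mtS : Multiplicative ℤ →* MappingTorus α hα :=
  zpowersHom _ (MappingTorus.t α hα)

theorem mtPi_mtS (z : Multiplicative ℤ) : mtPi α hα (mtS α hα z) = z := by
  show mtPi α hα ((MappingTorus.t α hα) ^ (Multiplicative.toAdd z)) = z
  rw [map_zpow, mtPi_t, ← ofAdd_zsmul, smul_eq_mul, mul_one, ofAdd_toAdd]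

theorem mtPi_surjective : Function.Surjective (mtPi α hα) :=
  fun z => ⟨mtS α hα z, mtPi_mtS α hα z⟩

end MT
/-! ### The induced maps on profinite completions -/

section Hat

variable {G : Type*} [Group G] (α : G →* G) (hα : Function.Injective ⇑α)

theorem piHat_sHat (z : ProfComp (Multiplicative ℤ)) :
    profMap (mtPi α hα) (profMap (mtS α hα) z) = z :=
  prof_fun_ext ((continuous_profMap (mtPi α hα)).comp (continuous_profMap (mtS α hα)))
    continuous_id
    (fun y => by simp only [Function.comp_apply, id_eq]; rw [profMap_toProf, profMap_toProf, mtPi_mtS]) z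

theorem piHat_iHat (x : ProfComp G) :
    profMap (mtPi α hα) (profMap (MappingTorus.of α hα) x) = 1 :=
  prof_fun_ext
    ((continuous_profMap (mtPi α hα)).comp (continuous_profMap (MappingTorus.of α hα)))
    continuous_const
    (fun y => by simp only [Function.comp_apply]; rw [profMap_toProf, profMap_toProf, mtPi_of, map_one]) x

theorem iHat_conj (x : ProfComp G) :
    profMap (MappingTorus.of α hα) (profMap α x) =
      toProf _ (MappingTorus.t α hα) * profMap (MappingTorus.of α hα) x *
        (toProf _ (MappingTorus.t α hα))⁻¹ :=
  prof_fun_ext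
    ((continuous_profMap (MappingTorus.of α hα)).comp (continuous_profMap α))
    ((continuous_const.mul ((continuous_profMap (MappingTorus.of α hα)))).mul continuous_const)
    (fun g => by
      simp only [Function.comp_apply, Pi.mul_apply]
      rw [profMap_toProf, profMap_toProf, profMap_toProf, mt_conj α hα g,
        map_mul, map_mul, map_inv]) x

theorem iHat_pow_conj (n : ℕ) (x : ProfComp G) :
    profMap (MappingTorus.of α hα) ((profEnd α ^ n) x) =
      (toProf _ (MappingTorus.t α hα)) ^ n * profMap (MappingTorus.of α hα) x *
        ((toProf _ (MappingTorus.t α hα)) ^ n)⁻¹ := by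
  induction n generalizing x with
  | zero => simp
  | succ n ih =>
    have h1 : (profEnd α ^ (n + 1)) x = (profEnd α ^ n) (profEnd α x) := by
      rw [pow_succ]; rfl
    rw [h1, ih (profEnd α x)]
    have h2 : profMap (MappingTorus.of α hα) (profEnd α x) =
        toProf _ (MappingTorus.t α hα) * profMap (MappingTorus.of α hα) x *
          (toProf _ (MappingTorus.t α hα))⁻¹ := iHat_conj α hα x
    rw [h2, pow_succ]
    group

theorem mem_eventualImage_iff {y : ProfComp G} :
    y ∈ profEventualImage α ↔ ∀ n : ℕ, ∃ w : ProfComp G, (profEnd α ^ n) w = y := by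
  simp only [profEventualImage, Subgroup.mem_iInf, Subgroup.mem_map, Subgroup.mem_top,
    true_and]
  exact forall_congr' fun n => ⟨fun h => let ⟨w, _, hw⟩ := Subgroup.mem_map.1 h; ⟨w, hw⟩, fun ⟨w, hw⟩ => Subgroup.mem_map.2 ⟨w, trivial, hw⟩⟩

theorem profMap_mem_eventualImage {y : ProfComp G} (hy : y ∈ profEventualImage α) :
    profMap α y ∈ profEventualImage α := by
  rw [mem_eventualImage_iff] at hy ⊢
  intro n
  cases n with
  | zero => exact ⟨profMap α y, rfl⟩
  | succ n =>
    obtain ⟨w, hw⟩ := hy n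
    refine ⟨w, ?_⟩
    have : (profEnd α ^ (n + 1)) w = profEnd α ((profEnd α ^ n) w) := by
      rw [pow_succ']; rfl
    rw [this, hw]; rfl

end Hat

/-! ### Automorphism stability for subgroups of finite groups -/

theorem conj_stab {Q : Type*} [Group Q] [Finite Q] (c : MulAut Q) (A : Subgroup Q)
    (h : ∀ a ∈ A, c a ∈ A) (a : Q) : a ∈ A ↔ c a ∈ A := by
  have hpow : ∀ n : ℕ, ∀ a ∈ A, (c ^ n) a ∈ A := by
    intro n
    induction n with
    | zero => intro a ha; simpa using ha
    | succ n ih =>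
      intro a ha
      have : (c ^ (n + 1)) a = (c ^ n) (c a) := by rw [pow_succ]; rfl
      rw [this]
      exact ih _ (h a ha)
  refine ⟨h a, fun hca => ?_⟩
  have hk : orderOf c - 1 + 1 = orderOf c := Nat.succ_pred_eq_of_pos (orderOf_pos c)
  have := hpow (orderOf c - 1) (c a) hca
  have heq : (c ^ (orderOf c - 1)) (c a) = a := by
    have : (c ^ (orderOf c - 1)) (c a) = (c ^ (orderOf c - 1) * c) a := rfl
    rw [this, ← pow_succ, hk, pow_orderOf_eq_one]
    rfl
  rwa [heq] at this
/-! ### Surjectivity: the kernel of `π̂` is contained in the image of `F̂` -/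

section Surj

variable {G : Type*} [Group G] (α : G →* G) (hα : Function.Injective ⇑α)

theorem ker_coord_mem_range (x : ProfComp (MappingTorus α hα))
    (hx : profMap (mtPi α hα) x = 1) (N : FinQuot (MappingTorus α hα)) :
    ∃ f : G, (toProf _ (MappingTorus.of α hα f)).1 N = x.1 N := by
  classical
  set mkN : MappingTorus α hα →* (MappingTorus α hα) ⧸ N.1 := QuotientGroup.mk' N.1 with hmkN
  set A : Subgroup ((MappingTorus α hα) ⧸ N.1) :=
    (mkN.comp (MappingTorus.of α hα)).range with hA
  set τ : (MappingTorus α hα) ⧸ N.1 := mkN (MappingTorus.t α hα) with hτ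
  have hAconj : ∀ a ∈ A, (MulAut.conj τ) a ∈ A := by
    rintro a ⟨f, rfl⟩
    refine ⟨α f, ?_⟩
    simp only [MonoidHom.comp_apply, MulAut.conj_apply, hτ]
    rw [← map_inv, ← map_mul, ← map_mul, ← mt_conj]
  have hiff : ∀ a, a ∈ A ↔ τ * a * τ⁻¹ ∈ A := by
    intro a
    simpa [MulAut.conj_apply] using conj_stab (MulAut.conj τ) A hAconj a
  have hAnormal : A.Normal := by
    rw [← Subgroup.normalizer_eq_top_iff, eq_top_iff]
    have hgen : Subgroup.closure
        (mkN '' (Set.range (MappingTorus.of α hα) ∪ {MappingTorus.t α hα})) = ⊤ := by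
      rw [← MonoidHom.map_closure, mt_closure, ← MonoidHom.range_eq_map,
        MonoidHom.range_eq_top]
      exact QuotientGroup.mk'_surjective N.1
    rw [← hgen]
    rw [Subgroup.closure_le]
    rintro _ ⟨m, hm, rfl⟩
    rcases hm with ⟨f, rfl⟩ | rfl
    · exact Subgroup.le_normalizer ⟨f, rfl⟩
    · rw [SetLike.mem_coe, Subgroup.mem_normalizer_iff]
      exact hiff
  haveI := hAnormal
  set γ : MappingTorus α hα →* ((MappingTorus α hα) ⧸ N.1) ⧸ A :=
    (QuotientGroup.mk' A).comp mkN with hγ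
  have hγof : ∀ f : G, γ (MappingTorus.of α hα f) = 1 := by
    intro f
    rw [hγ, MonoidHom.comp_apply]
    exact (QuotientGroup.eq_one_iff _).2 ⟨f, rfl⟩
  have hγt : ∀ m : MappingTorus α hα,
      γ m = (γ (MappingTorus.t α hα)) ^ (Multiplicative.toAdd (mtPi α hα m)) := by
    set S : Subgroup (MappingTorus α hα) :=
      { carrier := {m | γ m = (γ (MappingTorus.t α hα)) ^ (Multiplicative.toAdd (mtPi α hα m))}
        one_mem' := by simp
        mul_mem' := by
          intro a b ha hb
          simp only [Set.mem_setOf_eq] at ha hb ⊢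
          rw [map_mul, map_mul, ha, hb, ← zpow_add, toAdd_mul]
        inv_mem' := by
          intro a ha
          simp only [Set.mem_setOf_eq] at ha ⊢
          rw [map_inv, map_inv, ha, ← zpow_neg, toAdd_inv] } with hS
    have hStop : S = ⊤ := by
      rw [eq_top_iff, ← mt_closure α hα, Subgroup.closure_le]
      rintro m (⟨f, rfl⟩ | rfl)
      · show γ _ = _
        rw [hγof, mtPi_of]
        simp
      · show γ _ = _
        rw [mtPi_t]
        simp
    intro m
    have : m ∈ S := by rw [hStop]; trivial
    exact this
  -- the subgroup of `M` of elements mapping into `A`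
  set Nd : Subgroup (MappingTorus α hα) := MonoidHom.ker γ with hNd
  have hNdmem : ∀ m, m ∈ Nd ↔ mkN m ∈ A := by
    intro m
    rw [hNd, MonoidHom.mem_ker, hγ, MonoidHom.comp_apply, ← MonoidHom.mem_ker,
      QuotientGroup.ker_mk' A]
  haveI : Nd.FiniteIndex := Subgroup.finiteIndex_ker γ
  haveI : Nd.Normal := by rw [hNd]; infer_instance
  set Z' : Subgroup (Multiplicative ℤ) := Subgroup.map (mtPi α hα) Nd with hZ'
  have hcomap : Subgroup.comap (mtPi α hα) Z' = Nd := by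
    apply le_antisymm
    · intro m hm
      obtain ⟨h, hh, hph⟩ := hm
      rw [hNd, MonoidHom.mem_ker, hγt m, ← hph, ← hγt h]
      exact hh
    · exact Subgroup.le_comap_map _ _
  have hZfin : Z'.FiniteIndex := by
    constructor
    have h1 : (Subgroup.comap (mtPi α hα) Z').index = Z'.index := by
      rw [Subgroup.index_comap, MonoidHom.range_eq_top.2 (mtPi_surjective α hα),
        Subgroup.relIndex_top_right]
    rw [hcomap] at h1
    rw [← h1]
    exact Subgroup.FiniteIndex.index_ne_zero
  set ZFQ : FinQuot (Multiplicative ℤ) := ⟨Z', inferInstance, hZfin⟩ with hZFQ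
  set NdFQ : FinQuot (MappingTorus α hα) := pullFQ (mtPi α hα) ZFQ with hNdFQ
  have hval : NdFQ.1 = Nd := hcomap
  -- the coordinate of x at NdFQ is 1
  have hxNd : x.1 NdFQ = 1 := by
    have hc := congrArg (fun w : ProfComp (Multiplicative ℤ) => w.1 ZFQ) hx
    simp only [profMap_coord, one_coord] at hc
    obtain ⟨g, hg⟩ := QuotientGroup.mk_surjective (x.1 NdFQ)
    have hc2 : QuotientGroup.map NdFQ.1 Z' (mtPi α hα) le_rfl (x.1 NdFQ) = 1 := hc
    rw [← hg] at hc2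
    erw [QuotientGroup.map_mk] at hc2
    rw [← hg, QuotientGroup.eq_one_iff]
    exact (QuotientGroup.eq_one_iff ((mtPi α hα) g)).1 hc2
  -- transfer to the coordinate at N
  have hle : N.1 ≤ NdFQ.1 := by
    rw [hval]
    intro n hn
    rw [hNdmem]
    have h1 : mkN n = 1 := (QuotientGroup.eq_one_iff n).2 hn
    rw [h1]
    exact one_mem A
  obtain ⟨m, hm⟩ := QuotientGroup.mk_surjective (x.1 N)
  have hcomp := x.2 N NdFQ hle
  rw [← hm] at hcomp
  erw [QuotientGroup.map_mk] at hcomp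
  rw [hxNd] at hcomp
  rw [QuotientGroup.eq_one_iff, hval, hNdmem] at hcomp
  obtain ⟨f, hf⟩ := hcomp
  exact ⟨f, by rw [toProf_coord, ← hm]; exact hf⟩

end Surj
/-! ### The kernel of `π̂` equals the image of the eventual image -/

section Surj2

variable {G : Type*} [Group G] (α : G →* G) (hα : Function.Injective ⇑α)

theorem continuous_profEnd_pow (n : ℕ) : Continuous ⇑(profEnd α ^ n) := by
  induction n with
  | zero => exact continuous_id.congr fun z => by rw [pow_zero]; rfl
  | succ n ih =>
    exact ((continuous_profMap α).comp ih).congr fun z => by rw [pow_succ']; rfl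

theorem ker_sub_range_iHat (x : ProfComp (MappingTorus α hα))
    (hx : profMap (mtPi α hα) x = 1) :
    ∃ w : ProfComp G, profMap (MappingTorus.of α hα) w = x := by
  have hsub : Set.range (fun f : G => toProf _ (MappingTorus.of α hα f)) ⊆
      Set.range (profMap (MappingTorus.of α hα)) := by
    rintro _ ⟨f, rfl⟩
    exact ⟨toProf G f, profMap_toProf _ f⟩
  have hclosed : IsClosed (Set.range (profMap (MappingTorus.of α hα))) :=
    (isCompact_range (continuous_profMap _)).isClosed
  have hx1 : x ∈ closure (Set.range fun f : G => toProf _ (MappingTorus.of α hα f)) :=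
    mem_closure_of_coords fun N => by
      obtain ⟨f, hf⟩ := ker_coord_mem_range α hα x hx N
      exact ⟨_, ⟨f, rfl⟩, hf⟩
  exact closure_minimal hsub hclosed hx1

theorem ker_eq_image (x : ProfComp (MappingTorus α hα))
    (hx : profMap (mtPi α hα) x = 1) :
    ∃ y, y ∈ profEventualImage α ∧ profMap (MappingTorus.of α hα) y = x := by
  set C : ℕ → Set (ProfComp G) := fun n =>
    (Set.range ⇑(profEnd α ^ n)) ∩ (⇑(profMap (MappingTorus.of α hα)) ⁻¹' ({x} : Set (ProfComp (MappingTorus α hα)))) with hC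
  have hCcompact : ∀ n, IsCompact (C n) := fun n =>
    (isCompact_range (continuous_profEnd_pow α n)).inter_right
      (IsClosed.preimage (continuous_profMap _) isClosed_singleton)
  have hCclosed : ∀ n, IsClosed (C n) := fun n => (hCcompact n).isClosed
  have hCnonempty : ∀ n, (C n).Nonempty := by
    intro n
    have h2 : profMap (mtPi α hα)
        (((toProf _ (MappingTorus.t α hα)) ^ n)⁻¹ * x *
          (toProf _ (MappingTorus.t α hα)) ^ n) = 1 := by
      rw [map_mul, map_mul, hx, map_inv]
      group
    obtain ⟨w, hw⟩ := ker_sub_range_iHat α hα _ h2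
    refine ⟨(profEnd α ^ n) w, ⟨w, rfl⟩, ?_⟩
    show profMap (MappingTorus.of α hα) ((profEnd α ^ n) w) ∈
      ({x} : Set (ProfComp (MappingTorus α hα)))
    rw [Set.mem_singleton_iff, iHat_pow_conj, hw]
    group
  have hdec : ∀ n, C (n + 1) ⊆ C n := by
    intro n z hz
    obtain ⟨⟨w, hw⟩, hz2⟩ := hz
    refine ⟨⟨profEnd α w, ?_⟩, hz2⟩
    rw [← hw, pow_succ]
    rfl
  obtain ⟨y, hy⟩ := IsCompact.nonempty_iInter_of_sequence_nonempty_isCompact_isClosed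
    C hdec hCnonempty (hCcompact 0) hCclosed
  refine ⟨y, ?_, ?_⟩
  · rw [mem_eventualImage_iff]
    intro n
    obtain ⟨⟨w, hw⟩, _⟩ := Set.mem_iInter.1 hy n
    exact ⟨w, hw⟩
  · have h3 := (Set.mem_iInter.1 hy 0).2
    simpa using h3

end Surj2
/-! ### Injectivity of `î` on the eventual image (free group case) -/

section Inj

variable {ι : Type} [Finite ι] (α : FreeGroup ι →* FreeGroup ι)
  (hα : Function.Injective ⇑α)

theorem iHat_injective_on_P {y : ProfComp (FreeGroup ι)} (hy : y ∈ profEventualImage α)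
    (h1 : profMap (MappingTorus.of α hα) y = 1) : y = 1 := by
  classical
  by_contra hne
  have hex : ∃ N₀ : FinQuot (FreeGroup ι), y.1 N₀ ≠ 1 := by
    by_contra hcon
    push_neg at hcon
    exact hne (ProfComp.ext' fun N => by rw [hcon N]; rfl)
  obtain ⟨N₀, hN₀⟩ := hex
  -- the big fully invariant subgroup
  haveI hfin : Finite (FreeGroup ι →* Equiv.Perm (FreeGroup ι ⧸ N₀.1)) :=
    Finite.of_surjective _ FreeGroup.lift.surjective
  set Λs : Subgroup (FreeGroup ι) :=
    ⨅ φ : FreeGroup ι →* Equiv.Perm (FreeGroup ι ⧸ N₀.1), φ.ker with hΛs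
  have hΛnormal : Λs.Normal := by
    constructor
    intro n hn g
    rw [Subgroup.mem_iInf] at hn ⊢
    intro φ
    exact φ.normal_ker.conj_mem n (hn φ) g
  have hΛfin : Λs.FiniteIndex :=
    Subgroup.finiteIndex_iInf fun φ => Subgroup.finiteIndex_ker φ
  have hΛle : Λs ≤ N₀.1 := by
    refine le_trans
      (iInf_le _ (MulAction.toPermHom (FreeGroup ι) (FreeGroup ι ⧸ N₀.1))) ?_
    intro g hg
    rw [MonoidHom.mem_ker] at hg
    have h2 := congrFun (congrArg (fun (e : Equiv.Perm (FreeGroup ι ⧸ N₀.1)) => ⇑e) hg)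
      ((1 : FreeGroup ι) : FreeGroup ι ⧸ N₀.1)
    simp only [MulAction.toPermHom_apply, MulAction.toPerm_apply, Equiv.Perm.coe_one,
      id_eq] at h2
    rw [MulAction.Quotient.smul_mk, smul_eq_mul, mul_one] at h2
    rw [← QuotientGroup.eq_one_iff, h2]
    exact (QuotientGroup.mk_one _)
  have hΛstab : Λs ≤ Subgroup.comap α Λs := by
    intro g hg
    rw [Subgroup.mem_comap]
    rw [Subgroup.mem_iInf] at hg ⊢
    intro φ
    exact hg (φ.comp α)
  set ΛFQ : FinQuot (FreeGroup ι) := ⟨Λs, hΛnormal, hΛfin⟩ with hΛFQ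
  -- the pullback chain and its stabilization
  set L : ℕ → FinQuot (FreeGroup ι) := fun n => (pullFQ α)^[n] ΛFQ with hL
  have hLsucc : ∀ n, (L (n + 1)).1 = Subgroup.comap α (L n).1 := by
    intro n
    rw [hL]
    simp only [Function.iterate_succ_apply']
    rfl
  have hLmono : ∀ n, (L n).1 ≤ (L (n + 1)).1 := by
    intro n
    induction n with
    | zero => rw [hLsucc 0]; exact hΛstab
    | succ n ih =>
      have h3 := Subgroup.comap_mono (f := α) ih
      rw [← hLsucc n, ← hLsucc (n + 1)] at h3
      exact h3
  have hstab : ∃ n, (L (n + 1)).1 = (L n).1 := by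
    by_contra hcon
    push_neg at hcon
    have hlt : ∀ n, (L (n + 1)).1.index < (L n).1.index := by
      intro n
      haveI : (L n).1.FiniteIndex := (L n).2.2
      exact Subgroup.index_strictAnti (lt_of_le_of_ne (hLmono n) fun h => hcon n h.symm)
    have hdesc : ∀ n, (L n).1.index + n ≤ (L 0).1.index := by
      intro n
      induction n with
      | zero => simp
      | succ n ih =>
        have h3 := hlt n
        omega
    have h4 := hdesc ((L 0).1.index + 1)
    omega
  obtain ⟨n₀, hn₀⟩ := hstab
  have hKcomap : Subgroup.comap α (L n₀).1 = (L n₀).1 := by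
    rw [← hLsucc n₀]
    exact hn₀
  have hKfq : pullFQ α (L n₀) = L n₀ := Subtype.ext hKcomap
  have hKle : (L n₀).1 ≤ Subgroup.comap α (L n₀).1 := le_of_eq hKcomap.symm
  set qb : FreeGroup ι ⧸ (L n₀).1 →* FreeGroup ι ⧸ (L n₀).1 :=
    QuotientGroup.map (L n₀).1 (L n₀).1 α hKle with hqb
  have hqbinj : Function.Injective qb := by
    rw [injective_iff_map_eq_one]
    intro a ha
    obtain ⟨g, rfl⟩ := QuotientGroup.mk_surjective a
    rw [hqb, QuotientGroup.map_mk] at ha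
    rw [QuotientGroup.eq_one_iff] at ha ⊢
    rw [← hKcomap]
    exact ha
  -- coordinates of iterates at the stable subgroup
  have hiterK : ∀ (n : ℕ) (z : ProfComp (FreeGroup ι)),
      ((profEnd α ^ n) z).1 (L n₀) = qb^[n] (z.1 (L n₀)) := by
    intro n
    induction n with
    | zero => intro z; rw [pow_zero]; rfl
    | succ n ih =>
      intro z
      have h4 : (profEnd α ^ (n + 1)) z = (profEnd α ^ n) (profMap α z) := by
        rw [pow_succ]; rfl
      rw [h4, ih, Function.iterate_succ_apply]
      congr 1
      have key : ∀ (W : FinQuot (FreeGroup ι)) (_ : W = L n₀)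
          (h : W.1 ≤ Subgroup.comap α (L n₀).1),
          QuotientGroup.map W.1 (L n₀).1 α h (z.1 W) = qb (z.1 (L n₀)) := by
        rintro W rfl h
        rfl
      exact key (pullFQ α (L n₀)) hKfq le_rfl
  -- downward transfer along the chain
  have htrans : ∀ (n m : ℕ) (z : ProfComp (FreeGroup ι)),
      z.1 (L (n + m)) = 1 → ((profEnd α ^ n) z).1 (L m) = 1 := by
    intro n
    induction n with
    | zero =>
      intro m z hz
      rw [pow_zero]
      have h0 : (0 : ℕ) + m = m := Nat.zero_add m
      rw [h0] at hz
      exact hz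
    | succ n ih =>
      intro m z hz
      have h4 : (profEnd α ^ (n + 1)) z = (profEnd α ^ n) (profMap α z) := by
        rw [pow_succ]; rfl
      rw [h4]
      apply ih m (profMap α z)
      have hW : pullFQ α (L (n + m)) = L (n + m + 1) := by
        rw [hL]
        simp only [Function.iterate_succ_apply']
      have hz2 : z.1 (L (n + m + 1)) = 1 := by
        have harith : n + 1 + m = n + m + 1 := by omega
        rw [harith] at hz
        exact hz
      have key : ∀ (W : FinQuot (FreeGroup ι)) (_ : W = L (n + m + 1))
          (h : W.1 ≤ Subgroup.comap α (L (n + m)).1),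
          z.1 W = 1 → QuotientGroup.map W.1 (L (n + m)).1 α h (z.1 W) = 1 := by
        rintro W rfl h hz1
        rw [hz1, map_one]
      exact key (pullFQ α (L (n + m))) hW le_rfl (by rw [hW]; exact hz2)
  -- the coordinate of y at the stable subgroup is nontrivial
  obtain ⟨z, hz⟩ := (mem_eventualImage_iff α).1 hy n₀
  have hyK : y.1 (L n₀) ≠ 1 := by
    intro hyK1
    have h5 := hiterK n₀ z
    rw [hz, hyK1] at h5
    have hzK : z.1 (L n₀) = 1 :=
      (Function.Injective.iterate hqbinj n₀) (by rw [← h5, iterate_map_one])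
    have h6 := htrans n₀ 0 z (by rw [Nat.add_zero]; exact hzK)
    rw [hz] at h6
    have hcompat := y.2 (L 0) N₀ hΛle
    rw [h6, map_one] at hcompat
    exact hN₀ hcompat.symm
  -- build the detecting finite quotient of the mapping torus
  set θ : MulAut (FreeGroup ι ⧸ (L n₀).1) :=
    MulEquiv.ofBijective qb ⟨hqbinj, (Finite.injective_iff_bijective.1 hqbinj).2⟩ with hθ
  set r := orderOf θ with hrdef
  haveI : NeZero r := ⟨(orderOf_pos θ).ne'⟩
  set fz : ℤ →+ Additive (MulAut (FreeGroup ι ⧸ (L n₀).1)) :=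
    { toFun := fun n => Additive.ofMul (θ ^ n)
      map_zero' := by simp
      map_add' := by intro a b; simp [zpow_add] } with hfz
  have hfzr : fz (r : ℤ) = 0 := by
    show Additive.ofMul (θ ^ (r : ℤ)) = 0
    rw [zpow_natCast, hrdef, pow_orderOf_eq_one]
    rfl
  set χ0 : ZMod r →+ Additive (MulAut (FreeGroup ι ⧸ (L n₀).1)) :=
    ZMod.lift r ⟨fz, hfzr⟩ with hχ0
  set χ : Multiplicative (ZMod r) →* MulAut (FreeGroup ι ⧸ (L n₀).1) :=
    { toFun := fun z => (χ0 (Multiplicative.toAdd z)).toMul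
      map_one' := by simp
      map_mul' := by intro a b; simp [toAdd_mul, map_add] } with hχ
  have hχ1 : χ (Multiplicative.ofAdd (1 : ZMod r)) = θ := by
    show (χ0 (1 : ZMod r)).toMul = θ
    have h7 : ((1 : ℤ) : ZMod r) = (1 : ZMod r) := Int.cast_one
    rw [← h7, hχ0, ZMod.lift_coe]
    show (Additive.ofMul (θ ^ (1 : ℤ))).toMul = θ
    rw [zpow_one]
    rfl
  set T := (FreeGroup ι ⧸ (L n₀).1) ⋊[χ] Multiplicative (ZMod r) with hT
  haveI : Finite T := Finite.of_injective
    (fun g : T => (g.left, g.right))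
    (by
      rintro ⟨a, b⟩ ⟨c, d⟩ h
      simp only [Prod.mk.injEq] at h
      exact SemidirectProduct.ext h.1 h.2)
  have hrel : ∀ a : ((⊤ : Subgroup (FreeGroup ι))),
      (SemidirectProduct.inr (Multiplicative.ofAdd (1 : ZMod r)) : T) *
        (SemidirectProduct.inl.comp (QuotientGroup.mk' (L n₀).1)) (a : FreeGroup ι) =
      (SemidirectProduct.inl.comp (QuotientGroup.mk' (L n₀).1))
          (((Subgroup.topEquiv.trans (MonoidHom.ofInjective hα)) a : FreeGroup ι)) *
        SemidirectProduct.inr (Multiplicative.ofAdd (1 : ZMod r)) := by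
    intro a
    have h8 : (((Subgroup.topEquiv.trans (MonoidHom.ofInjective hα)) a : FreeGroup ι)) =
        α (a : FreeGroup ι) := by
      simp [MonoidHom.ofInjective_apply]
    rw [h8]
    have h9 : ∀ n : FreeGroup ι ⧸ (L n₀).1,
        (SemidirectProduct.inr (Multiplicative.ofAdd (1 : ZMod r)) : T) *
          SemidirectProduct.inl n =
        SemidirectProduct.inl (χ (Multiplicative.ofAdd (1 : ZMod r)) n) *
          SemidirectProduct.inr (Multiplicative.ofAdd (1 : ZMod r)) := by
      intro n
      rw [SemidirectProduct.inl_aut]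
      simp [mul_assoc]
    simp only [MonoidHom.comp_apply]
    rw [h9, hχ1]
    congr 2
  set ψ : MappingTorus α hα →* T :=
    HNNExtension.lift (SemidirectProduct.inl.comp (QuotientGroup.mk' (L n₀).1))
      (SemidirectProduct.inr (Multiplicative.ofAdd (1 : ZMod r))) hrel with hψ
  have hψof : ∀ g : FreeGroup ι,
      ψ (MappingTorus.of α hα g) = SemidirectProduct.inl (QuotientGroup.mk g) :=
    fun g => HNNExtension.lift_of _ _ _ g
  set NM : FinQuot (MappingTorus α hα) :=
    pullFQ ψ ⟨⊥, inferInstance, inferInstance⟩ with hNM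
  have hpullof : pullFQ (MappingTorus.of α hα) NM = L n₀ := by
    apply Subtype.ext
    show Subgroup.comap (MappingTorus.of α hα) NM.1 = (L n₀).1
    ext g
    rw [Subgroup.mem_comap]
    show MappingTorus.of α hα g ∈ NM.1 ↔ _
    rw [hNM]
    show ψ (MappingTorus.of α hα g) ∈ (⊥ : Subgroup T) ↔ _
    rw [Subgroup.mem_bot, hψof g]
    constructor
    · intro h10
      have h11 : (QuotientGroup.mk g : FreeGroup ι ⧸ (L n₀).1) = 1 :=
        SemidirectProduct.inl_injective (by rw [h10, map_one])
      rwa [QuotientGroup.eq_one_iff] at h11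
    · intro h10
      have h11 : (QuotientGroup.mk g : FreeGroup ι ⧸ (L n₀).1) = 1 :=
        (QuotientGroup.eq_one_iff g).2 h10
      rw [h11, map_one]
  -- derive the contradiction
  have hcoord := congrArg (fun w : ProfComp (MappingTorus α hα) => w.1 NM) h1
  simp only [one_coord] at hcoord
  have key2 : ∀ (W : FinQuot (FreeGroup ι)) (_ : W = L n₀)
      (h : W.1 ≤ Subgroup.comap (MappingTorus.of α hα) NM.1),
      QuotientGroup.map W.1 NM.1 (MappingTorus.of α hα) h (y.1 W) = 1 → False := by
    rintro W rfl h hmap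
    obtain ⟨g, hg⟩ := QuotientGroup.mk_surjective (y.1 (L n₀))
    rw [← hg, QuotientGroup.map_mk, QuotientGroup.eq_one_iff] at hmap
    have h12 : ψ (MappingTorus.of α hα g) = 1 := hmap
    rw [hψof g] at h12
    have h13 : (QuotientGroup.mk g : FreeGroup ι ⧸ (L n₀).1) = 1 :=
      SemidirectProduct.inl_injective (by rw [h12, map_one])
    exact hyK (by rw [← hg, h13])
  have hle2 : (pullFQ (MappingTorus.of α hα) NM).1 ≤
      Subgroup.comap (MappingTorus.of α hα) NM.1 := le_rfl
  exact key2 (pullFQ (MappingTorus.of α hα) NM) hpullof hle2 hcoord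

end Inj
/-- The profinite completion of the mapping torus `M_α` of an injective endomorphism
`α` of a finitely generated free group `F` is isomorphic to `Ẑ ⋉ P`, where
`P = ⋂ₙ α̂ⁿ(F̂)` is the intersection of the images of the iterates of the induced
endomorphism `α̂` of the profinite completion `F̂`, and the action of (a generator of)
`Ẑ` is via the restriction of `α̂` to `P`. -/
theorem profComp_mappingTorus_iso_semidirect {ι : Type} [Finite ι]
    (α : FreeGroup ι →* FreeGroup ι) (hα : Function.Injective ⇑α) :
    ∃ ρ : ProfComp (Multiplicative ℤ) →* MulAut (profEventualImage α),
      (∀ x : profEventualImage α,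
        ((ρ (toProf (Multiplicative ℤ) (Multiplicative.ofAdd 1)) x : profEventualImage α) :
            ProfComp (FreeGroup ι)) = profMap α (x : ProfComp (FreeGroup ι))) ∧
      Nonempty (ProfComp (MappingTorus α hα) ≃*
        (profEventualImage α) ⋊[ρ] ProfComp (Multiplicative ℤ)) := by
  classical
  set i : ProfComp (FreeGroup ι) →* ProfComp (MappingTorus α hα) :=
    profMap (MappingTorus.of α hα) with hi
  set πh : ProfComp (MappingTorus α hα) →* ProfComp (Multiplicative ℤ) :=
    profMap (mtPi α hα) with hπ
  set sh : ProfComp (Multiplicative ℤ) →* ProfComp (MappingTorus α hα) :=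
    profMap (mtS α hα) with hs
  set P : Subgroup (ProfComp (FreeGroup ι)) := profEventualImage α with hP
  set P' : Subgroup (ProfComp (MappingTorus α hα)) := MonoidHom.ker πh with hP'
  haveI : P'.Normal := by rw [hP']; infer_instance
  have hiP : ∀ p : P, i (p : ProfComp (FreeGroup ι)) ∈ P' := fun p => by
    rw [hP', MonoidHom.mem_ker]
    exact piHat_iHat α hα _
  set j : P →* P' := MonoidHom.codRestrict (i.comp P.subtype) P' hiP with hj
  have hjinj : Function.Injective j := by
    rw [injective_iff_map_eq_one]
    intro p hp
    have h2 : i (p : ProfComp (FreeGroup ι)) = 1 := by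
      have h3 := congrArg (Subtype.val) hp
      exact h3
    exact Subtype.ext (iHat_injective_on_P α hα p.2 h2)
  have hjsurj : Function.Surjective j := by
    rintro ⟨x, hx⟩
    rw [hP', MonoidHom.mem_ker] at hx
    obtain ⟨y, hyP, hyx⟩ := ker_eq_image α hα x hx
    exact ⟨⟨y, hyP⟩, Subtype.ext hyx⟩
  set e : P ≃* P' := MulEquiv.ofBijective j ⟨hjinj, hjsurj⟩ with he
  set ρ : ProfComp (Multiplicative ℤ) →* MulAut P :=
    ((MulAut.congr e).symm.toMonoidHom).comp (MulAut.conjNormal.comp sh) with hρ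
  have hρapply : ∀ (z : ProfComp (Multiplicative ℤ)) (p : P),
      ρ z p = e.symm (MulAut.conjNormal (sh z) (e p)) := fun z p => rfl
  have heval : ∀ p : P, ((e p : P') : ProfComp (MappingTorus α hα)) =
      i (p : ProfComp (FreeGroup ι)) := fun p => rfl
  -- the action of the canonical generator is `α̂`
  have hsgen : sh (toProf (Multiplicative ℤ) (Multiplicative.ofAdd 1)) =
      toProf _ (MappingTorus.t α hα) := by
    rw [hs, profMap_toProf]
    congr 1
  have hgen : ∀ x : P,
      ((ρ (toProf (Multiplicative ℤ) (Multiplicative.ofAdd 1)) x : P) :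
          ProfComp (FreeGroup ι)) = profMap α (x : ProfComp (FreeGroup ι)) := by
    intro x
    have hαx : profMap α (x : ProfComp (FreeGroup ι)) ∈ P := profMap_mem_eventualImage α x.2
    have hkey : e ⟨profMap α (x : ProfComp (FreeGroup ι)), hαx⟩ =
        MulAut.conjNormal (sh (toProf (Multiplicative ℤ) (Multiplicative.ofAdd 1))) (e x) := by
      apply Subtype.ext
      rw [hsgen]
      have h4 : ((MulAut.conjNormal (toProf _ (MappingTorus.t α hα)) (e x) : P') :
          ProfComp (MappingTorus α hα)) =
          toProf _ (MappingTorus.t α hα) * (i (x : ProfComp (FreeGroup ι))) *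
            (toProf _ (MappingTorus.t α hα))⁻¹ := by
        rw [MulAut.conjNormal_apply, heval]
      rw [h4]
      exact iHat_conj α hα _
    have h5 : ρ (toProf _ (Multiplicative.ofAdd 1)) x =
        ⟨profMap α (x : ProfComp (FreeGroup ι)), hαx⟩ := by
      rw [hρapply, ← hkey, MulEquiv.symm_apply_apply]
    rw [h5]
  -- the homomorphism from the semidirect product
  have hcond : ∀ z : ProfComp (Multiplicative ℤ),
      (i.comp P.subtype).comp (ρ z).toMonoidHom =
        (MulAut.conj (sh z)).toMonoidHom.comp (i.comp P.subtype) := by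
    intro z
    ext p
    show i ((ρ z p : P) : ProfComp (FreeGroup ι)) =
      sh z * i (p : ProfComp (FreeGroup ι)) * (sh z)⁻¹
    have h5 : e (ρ z p) = MulAut.conjNormal (sh z) (e p) := by
      rw [hρapply, MulEquiv.apply_symm_apply]
    have h6 : i ((ρ z p : P) : ProfComp (FreeGroup ι)) =
        ((e (ρ z p) : P') : ProfComp (MappingTorus α hα)) := rfl
    rw [h6, h5, MulAut.conjNormal_apply, heval]
  set Φ : P ⋊[ρ] ProfComp (Multiplicative ℤ) →* ProfComp (MappingTorus α hα) :=
    SemidirectProduct.lift (i.comp P.subtype) sh hcond with hΦ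
  have hΦdec : ∀ w : P ⋊[ρ] ProfComp (Multiplicative ℤ),
      Φ w = i ((w.left : P) : ProfComp (FreeGroup ι)) * sh w.right := by
    intro w
    conv_lhs => rw [← SemidirectProduct.inl_left_mul_inr_right w]
    rw [map_mul, hΦ, SemidirectProduct.lift_inl, SemidirectProduct.lift_inr]
    rfl
  have hΦinj : Function.Injective Φ := by
    rw [injective_iff_map_eq_one]
    intro w hw
    rw [hΦdec w] at hw
    have h7 : w.right = 1 := by
      have h8 := congrArg πh hw
      rw [map_mul, map_one] at h8
      have h9 : πh (i ((w.left : P) : ProfComp (FreeGroup ι))) = 1 := piHat_iHat α hα _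
      have h10 : πh (sh w.right) = w.right := piHat_sHat α hα w.right
      rw [h9, one_mul, h10] at h8
      exact h8
    rw [h7, map_one, mul_one] at hw
    have h11 : (w.left : P) = 1 :=
      Subtype.ext (iHat_injective_on_P α hα (w.left : P).2 hw)
    exact SemidirectProduct.ext h11 h7
  have hΦsurj : Function.Surjective Φ := by
    intro m
    have hker : πh (m * (sh (πh m))⁻¹) = 1 := by
      rw [map_mul, map_inv, piHat_sHat α hα (πh m)]
      group
    obtain ⟨y, hyP, hyx⟩ := ker_eq_image α hα (m * (sh (πh m))⁻¹) hker
    refine ⟨⟨⟨y, hyP⟩, πh m⟩, ?_⟩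
    have h12 : (⟨⟨y, hyP⟩, πh m⟩ : P ⋊[ρ] ProfComp (Multiplicative ℤ)).left = ⟨y, hyP⟩ := rfl
    have h13 : (⟨⟨y, hyP⟩, πh m⟩ : P ⋊[ρ] ProfComp (Multiplicative ℤ)).right = πh m := rfl
    rw [hΦdec, h12, h13]
    show i y * sh (πh m) = m
    rw [hyx]
    group
  exact ⟨ρ, hgen, ⟨(MulEquiv.ofBijective Φ ⟨hΦinj, hΦsurj⟩).symm⟩⟩
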